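/- Improved tan(θ) eigenvector bound: Let A be a self-adjoint operator whose smallest eigenvalue λ is isolated with complete eigenspace X, and β > λ the next point of the spectrum. Let y ≠ 0 with λ < ρ(y) < β, set x = P_X y, S = span{x,y}, and θ = ∠{x,y} < π/2. Then tan(θ) ≤ (1/(β − ρ(y)))·‖P_S r(y)‖/‖y‖. -/

import Mathlib

set_option maxHeartbeats 1000000
set_option synthInstance.maxHeartbeats 1000000
set_option linter.unusedSectionVars false
set_option linter.unnecessarySimpa false


open scoped RealInnerProductSpace
open Submodule

noncomputable section

variable {H : Type*} [NormedAddCommGroup H] [InnerProductSpace ℝ H]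

/-- The Rayleigh quotient of `x` with respect to `A`. -/
def rq (A : H →L[ℝ] H) (x : H) : ℝ := ⟪x, A x⟫ / ⟪x, x⟫

/-- The residual of `x` with respect to `A`. -/
def res (A : H →L[ℝ] H) (x : H) : H := A x - rq A x • x

/-- The acute angle between two vectors. -/
def ang (x y : H) : ℝ := Real.arccos (|⟪x, y⟫| / (‖x‖ * ‖y‖))

section AuxSpectral
variable [CompleteSpace H]

/-- positivity predicate -/
def Pos (T : H →L[ℝ] H) : Prop := IsSelfAdjoint T ∧ ∀ v : H, 0 ≤ ⟪v, T v⟫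

lemma Pos.add {P Q : H →L[ℝ] H} (hP : Pos P) (hQ : Pos Q) : Pos (P + Q) :=
  ⟨hP.1.add hQ.1, fun v => by
    simpa [inner_add_right] using add_nonneg (hP.2 v) (hQ.2 v)⟩

lemma Pos.smul {P : H →L[ℝ] H} (hP : Pos P) {c : ℝ} (hc : 0 ≤ c) : Pos (c • P) := by
  refine ⟨?_, fun v => by
    simpa [inner_smul_right] using mul_nonneg hc (hP.2 v)⟩
  have := hP.1
  simp only [IsSelfAdjoint, star_smul, star_trivial] at this ⊢
  rw [this]

lemma pos_formCS {P : H →L[ℝ] H} (hP : Pos P) (u v : H) :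
    ⟪u, P v⟫ ^ 2 ≤ ⟪u, P u⟫ * ⟪v, P v⟫ := by
  have key : ∀ t : ℝ, 0 ≤ ⟪v, P v⟫ * (t * t) + (2 * ⟪u, P v⟫) * t + ⟪u, P u⟫ := by
    intro t
    have h0 := hP.2 (u + t • v)
    have hsym : ⟪v, P u⟫ = ⟪u, P v⟫ := by
      rw [real_inner_comm]
      simpa using hP.1.isSymmetric u v
    rw [map_add, map_smul, inner_add_left, inner_add_right, inner_add_right,
      real_inner_smul_left, real_inner_smul_right, real_inner_smul_left,
      real_inner_smul_right, hsym] at h0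
    nlinarith [h0]
  have := discrim_le_zero key
  rw [discrim] at this
  nlinarith [this]

lemma pos_GCS {P : H →L[ℝ] H} (hP : Pos P) (v : H) :
    ‖P v‖ ^ 2 ≤ ‖P‖ * ⟪v, P v⟫ := by
  rcases eq_or_ne (P v) 0 with h | h
  · rw [h]
    simp only [norm_zero]
    have := mul_nonneg (norm_nonneg P) (hP.2 v)
    simpa using this
  · have h1 := pos_formCS hP (P v) v
    have h2 : ⟪P v, P (P v)⟫ ≤ ‖P‖ * ‖P v‖ ^ 2 := by
      calc ⟪P v, P (P v)⟫ ≤ ‖P v‖ * ‖P (P v)‖ := real_inner_le_norm _ _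
        _ ≤ ‖P v‖ * (‖P‖ * ‖P v‖) := by
            have := P.le_opNorm (P v)
            nlinarith [norm_nonneg (P v)]
        _ = ‖P‖ * ‖P v‖ ^ 2 := by ring
    have h3 : ⟪P v, P v⟫ = ‖P v‖ ^ 2 := real_inner_self_eq_norm_sq _
    have h4 : (0:ℝ) < ‖P v‖ ^ 2 := by
      have : ‖P v‖ ≠ 0 := norm_ne_zero_iff.mpr h
      positivity
    have h5 : ⟪P v, P v⟫ ^ 2 ≤ (‖P‖ * ‖P v‖ ^ 2) * ⟪v, P v⟫ := by
      refine h1.trans ?_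
      exact mul_le_mul_of_nonneg_right h2 (hP.2 v)
    rw [h3] at h5
    have := hP.2 v
    nlinarith [h5, h4]

lemma pos_of_units {S : H →L[ℝ] H} (hS : IsSelfAdjoint S)
    (h : ∀ μ : ℝ, μ < 0 → IsUnit (S - μ • (1 : H →L[ℝ] H))) :
    ∀ v : H, 0 ≤ ⟪v, S v⟫ := by
  by_contra hcon
  push_neg at hcon
  obtain ⟨v₀, hv₀⟩ := hcon
  have hv₀ne : v₀ ≠ 0 := by
    rintro rfl; simp at hv₀
  set s : Set ℝ := {r : ℝ | ∃ v : H, ‖v‖ = 1 ∧ r = ⟪v, S v⟫} with hs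
  have hne : s.Nonempty := by
    refine ⟨⟪‖v₀‖⁻¹ • v₀, S (‖v₀‖⁻¹ • v₀)⟫, ‖v₀‖⁻¹ • v₀, ?_, rfl⟩
    rw [norm_smul]
    simp [norm_ne_zero_iff.mpr hv₀ne]
  have hbdd : BddBelow s := by
    refine ⟨-‖S‖, ?_⟩
    rintro r ⟨v, hv1, rfl⟩
    have h1 : |⟪v, S v⟫| ≤ ‖v‖ * ‖S v‖ := abs_real_inner_le_norm _ _
    have h2 : ‖S v‖ ≤ ‖S‖ * ‖v‖ := S.le_opNorm v
    rw [hv1] at h1 h2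
    simp only [one_mul, mul_one] at h1 h2
    have := abs_le.mp (h1.trans h2)
    linarith [this.1]
  set m : ℝ := sInf s with hm
  have hmneg : m < 0 := by
    have hmem : ⟪‖v₀‖⁻¹ • v₀, S (‖v₀‖⁻¹ • v₀)⟫ ∈ s := by
      refine ⟨‖v₀‖⁻¹ • v₀, ?_, rfl⟩
      rw [norm_smul]; simp [norm_ne_zero_iff.mpr hv₀ne]
    have hle := csInf_le hbdd hmem
    have hneg : ⟪‖v₀‖⁻¹ • v₀, S (‖v₀‖⁻¹ • v₀)⟫ < 0 := by
      rw [map_smul, real_inner_smul_left, real_inner_smul_right]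
      have hn : (0:ℝ) < ‖v₀‖⁻¹ := by
        simp [norm_pos_iff.mpr hv₀ne]
      exact mul_neg_of_pos_of_neg hn (mul_neg_of_pos_of_neg hn hv₀)
    linarith
  set S' : H →L[ℝ] H := S - m • (1 : H →L[ℝ] H) with hS'
  have hS'sa : IsSelfAdjoint S' := by
    have h1 : IsSelfAdjoint (m • (1 : H →L[ℝ] H)) := by
      simp only [IsSelfAdjoint, star_smul, star_trivial, star_one]
    exact hS.sub h1
  have hS'apply : ∀ v : H, ⟪v, S' v⟫ = ⟪v, S v⟫ - m * ⟪v, v⟫ := by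
    intro v
    simp only [hS', ContinuousLinearMap.sub_apply, ContinuousLinearMap.smul_apply,
      ContinuousLinearMap.one_apply, inner_sub_right, real_inner_smul_right]
  have hS'pos : Pos S' := by
    refine ⟨hS'sa, fun v => ?_⟩
    rcases eq_or_ne v 0 with rfl | hv
    · simp
    · have hnv : (0:ℝ) < ‖v‖ := norm_pos_iff.mpr hv
      have hmem : ⟪‖v‖⁻¹ • v, S (‖v‖⁻¹ • v)⟫ ∈ s := by
        refine ⟨‖v‖⁻¹ • v, ?_, rfl⟩
        rw [norm_smul]; simp [hnv.ne']
      have hle := csInf_le hbdd hmem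
      rw [map_smul, real_inner_smul_left, real_inner_smul_right] at hle
      rw [hS'apply, real_inner_self_eq_norm_sq]
      have h2 : m * ‖v‖^2 ≤ ⟪v, S v⟫ := by
        have hne' : (‖v‖:ℝ) ≠ 0 := hnv.ne'
        rw [← hm] at hle
        have := mul_le_mul_of_nonneg_left hle (le_of_lt (mul_pos hnv hnv))
        field_simp at this ⊢
        nlinarith [this]
      linarith
  obtain ⟨u, hu⟩ := h m hmneg
  have hinv : ∀ z : H, (↑u⁻¹ : H →L[ℝ] H) (S' z) = z := by
    intro z
    have : (↑u⁻¹ * ↑u : H →L[ℝ] H) = 1 := by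
      rw [Units.inv_mul]
    calc (↑u⁻¹ : H →L[ℝ] H) (S' z) = (↑u⁻¹ * ↑u : H →L[ℝ] H) z := by rw [hu]; rfl
      _ = z := by rw [this]; rfl
  set c : ℝ := ‖(↑u⁻¹ : H →L[ℝ] H)‖ with hc
  have hcpos : 0 < c := by
    rw [hc, norm_pos_iff]
    intro h0
    have := hinv v₀
    rw [h0] at this
    simp at this
    exact hv₀ne this.symm
  set ε : ℝ := 1 / (c^2 * (‖S'‖ + 1)) with hε
  have hεpos : 0 < ε := by
    have : (0:ℝ) < ‖S'‖ + 1 := by positivity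
    positivity
  obtain ⟨a, hamem, halt⟩ := exists_lt_of_csInf_lt hne (show sInf s < m + ε by rw [← hm]; linarith)
  obtain ⟨v, hv1, rfl⟩ := hamem
  have hq : ⟪v, S' v⟫ < ε := by
    rw [hS'apply, real_inner_self_eq_norm_sq, hv1]
    have hle := csInf_le hbdd (⟨v, hv1, rfl⟩ : ⟪v, S v⟫ ∈ s)
    simp only [one_pow, mul_one]
    linarith
  have hgcs := pos_GCS hS'pos v
  have hub : ‖S' v‖^2 < 1 / c^2 := by
    have h1 : ‖S'‖ * ⟪v, S' v⟫ ≤ ‖S'‖ * ε := by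
      rcases eq_or_lt_of_le (norm_nonneg S') with h0 | h0
      · rw [← h0]; simp
      · exact mul_le_mul_of_nonneg_left hq.le h0.le
    have h2 : ‖S'‖ * ε < 1 / c^2 := by
      have hc2 : (0:ℝ) < c^2 := by positivity
      have hs1 : (0:ℝ) < ‖S'‖ + 1 := by positivity
      rw [hε, mul_one_div, div_lt_div_iff₀ (by positivity) hc2]
      nlinarith [norm_nonneg S']
    linarith
  have hlb : 1 / c^2 ≤ ‖S' v‖^2 := by
    have h1 : (1:ℝ) = ‖v‖ := hv1.symm
    have h2 : ‖v‖ ≤ c * ‖S' v‖ := by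
      calc ‖v‖ = ‖(↑u⁻¹ : H →L[ℝ] H) (S' v)‖ := by rw [hinv]
        _ ≤ c * ‖S' v‖ := (↑u⁻¹ : H →L[ℝ] H).le_opNorm _
    have h3 : 1 ≤ c * ‖S' v‖ := by rw [h1]; exact h2
    rw [div_le_iff₀ (by positivity)]
    nlinarith [norm_nonneg (S' v)]
  linarith

/-- Riesz–Nagy iteration sequence. -/
def rnSeq (P₀ : H →L[ℝ] H) : ℕ → (H →L[ℝ] H)
  | 0 => P₀
  | n + 1 => rnSeq P₀ n - rnSeq P₀ n * rnSeq P₀ n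

lemma inner_sq_eq {P : H →L[ℝ] H} (hP : IsSelfAdjoint P) (R : H →L[ℝ] H) (v : H) :
    ⟪v, (P * R * P) v⟫ = ⟪P v, R (P v)⟫ := by
  have : (P * R * P) v = P (R (P v)) := rfl
  rw [this]
  have := hP.isSymmetric (R (P v)) v
  simpa [real_inner_comm] using (hP.isSymmetric v (R (P v))).symm

lemma pos_one_sub_smul {P : H →L[ℝ] H} (hP : Pos P) (hPn : P ≠ 0) :
    Pos (‖P‖⁻¹ • P) ∧ Pos (1 - ‖P‖⁻¹ • P) := by
  have hn : (0:ℝ) < ‖P‖ := norm_pos_iff.mpr hPn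
  have hsa : IsSelfAdjoint (‖P‖⁻¹ • P) := by
    have := hP.1
    simp only [IsSelfAdjoint, star_smul, star_trivial] at this ⊢
    rw [this]
  constructor
  · exact ⟨hsa, fun v => by
      rw [ContinuousLinearMap.smul_apply, real_inner_smul_right]
      exact mul_nonneg (by positivity) (hP.2 v)⟩
  · refine ⟨(IsSelfAdjoint.one _).sub hsa, fun v => ?_⟩
    simp only [ContinuousLinearMap.sub_apply, ContinuousLinearMap.one_apply,
      ContinuousLinearMap.smul_apply, inner_sub_right, real_inner_smul_right]
    have h1 : ⟪v, P v⟫ ≤ ‖P‖ * (‖v‖ * ‖v‖) := by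
      calc ⟪v, P v⟫ ≤ ‖v‖ * ‖P v‖ := real_inner_le_norm _ _
        _ ≤ ‖v‖ * (‖P‖ * ‖v‖) := by
            have := P.le_opNorm v
            nlinarith [norm_nonneg v]
        _ = ‖P‖ * (‖v‖ * ‖v‖) := by ring
    have h2 : ⟪v, v⟫ = ‖v‖ * ‖v‖ := real_inner_self_eq_norm_mul_norm _
    rw [h2]
    have h3 : ‖P‖⁻¹ * ⟪v, P v⟫ ≤ ‖v‖ * ‖v‖ := by
      rw [inv_mul_le_iff₀ hn]
      exact h1
    linarith

lemma rnSeq_props (P₀ Q : H →L[ℝ] H) (h0 : Pos P₀) (h1 : Pos (1 - P₀))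
    (hQ : Commute P₀ Q) :
    ∀ n, Pos (rnSeq P₀ n) ∧ Pos (1 - rnSeq P₀ n) ∧ Commute (rnSeq P₀ n) Q := by
  intro n
  induction n with
  | zero => exact ⟨h0, h1, hQ⟩
  | succ n ih =>
    obtain ⟨hp, hp1, hq⟩ := ih
    set S := rnSeq P₀ n with hSdef
    have hstep : rnSeq P₀ (n+1) = S - S * S := rfl
    have hsa : IsSelfAdjoint (S * S) := by
      have := hp.1
      simp only [IsSelfAdjoint, star_mul] at this ⊢
      rw [this]
    refine ⟨⟨hp.1.sub hsa, fun v => ?_⟩, ⟨?_, fun v => ?_⟩, ?_⟩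
    · -- 0 ≤ ⟪v, (S - S²) v⟫ = ⟪v, (S(1-S)S + (1-S)S(1-S)) v⟫
      have hid : S - S * S = S * (1 - S) * S + (1 - S) * S * (1 - S) := by noncomm_ring
      rw [hstep, hid]
      have e1 := inner_sq_eq hp.1 (1 - S) v
      have e2 := inner_sq_eq hp1.1 S v
      rw [ContinuousLinearMap.add_apply, inner_add_right, e1, e2]
      exact add_nonneg (hp1.2 (S v)) (hp.2 ((1 - S) v))
    · rw [hstep]
      have : (1 : H →L[ℝ] H) - (S - S * S) = (1 - S) + S * S := by noncomm_ring
      rw [this]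
      exact ((IsSelfAdjoint.one _).sub hp.1).add hsa
    · rw [hstep]
      have hid : (1 : H →L[ℝ] H) - (S - S * S) = (1 - S) + S * S := by noncomm_ring
      rw [hid, ContinuousLinearMap.add_apply, inner_add_right]
      refine add_nonneg (hp1.2 v) ?_
      have hSS : (S * S) v = S (S v) := rfl
      rw [hSS, real_inner_comm]
      have hsym := hp.1.isSymmetric (S v) v
      simp only [ContinuousLinearMap.coe_coe] at hsym
      rw [hsym]
      exact real_inner_self_nonneg
    · rw [hstep]
      exact (hq.sub_left (hq.mul_left hq))

lemma rnSeq_telescope (P₀ : H →L[ℝ] H) (n : ℕ) :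
    (Finset.range n).sum (fun k => rnSeq P₀ k * rnSeq P₀ k) = P₀ - rnSeq P₀ n := by
  induction n with
  | zero => simp [rnSeq]
  | succ n ih =>
    rw [Finset.sum_range_succ, ih]
    have : rnSeq P₀ (n+1) = rnSeq P₀ n - rnSeq P₀ n * rnSeq P₀ n := rfl
    rw [this]; noncomm_ring

lemma pos_mul_of_commute {P Q : H →L[ℝ] H} (hP : Pos P) (hQ : Pos Q)
    (hc : Commute P Q) (v : H) : 0 ≤ ⟪v, (P * Q) v⟫ := by
  rcases eq_or_ne P 0 with rfl | hPn
  · simp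
  have hn : (0:ℝ) < ‖P‖ := norm_pos_iff.mpr hPn
  set P₀ : H →L[ℝ] H := ‖P‖⁻¹ • P with hP₀
  obtain ⟨h0, h1⟩ := pos_one_sub_smul hP hPn
  have hPQapp : ∀ z, P (Q z) = Q (P z) := fun z => DFunLike.congr_fun hc.eq z
  have hQc : Commute P₀ Q := by
    show P₀ * Q = Q * P₀
    ext z
    show P₀ (Q z) = Q (P₀ z)
    rw [hP₀]
    simp only [ContinuousLinearMap.smul_apply]
    rw [hPQapp z, map_smul]
  have props := rnSeq_props P₀ Q h0 h1 hQc
  -- b n := ⟪v, rnSeq n v⟫ is antitone, nonneg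
  set b : ℕ → ℝ := fun n => ⟪v, rnSeq P₀ n v⟫ with hb
  have hbnonneg : ∀ n, 0 ≤ b n := fun n => (props n).1.2 v
  have hbdiff : ∀ n, b n - b (n+1) = ‖rnSeq P₀ n v‖^2 := by
    intro n
    have hstep : rnSeq P₀ (n+1) = rnSeq P₀ n - rnSeq P₀ n * rnSeq P₀ n := rfl
    rw [hb]
    simp only [hstep, ContinuousLinearMap.sub_apply, inner_sub_right]
    have h2 : (rnSeq P₀ n * rnSeq P₀ n) v = rnSeq P₀ n (rnSeq P₀ n v) := rfl
    rw [h2]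
    have hsym := (props n).1.1.isSymmetric v (rnSeq P₀ n v)
    simp only [ContinuousLinearMap.coe_coe] at hsym
    rw [← hsym, real_inner_self_eq_norm_sq]
    ring
  have hbanti : Antitone b := antitone_nat_of_succ_le (fun n => by
    have := hbdiff n
    nlinarith [sq_nonneg ‖rnSeq P₀ n v‖])
  have hbdd : BddBelow (Set.range b) := ⟨0, by rintro r ⟨n, rfl⟩; exact hbnonneg n⟩
  have hbconv : Filter.Tendsto b Filter.atTop (nhds (⨅ n, b n)) :=
    tendsto_atTop_ciInf hbanti hbdd
  have hdiff0 : Filter.Tendsto (fun n => b n - b (n+1)) Filter.atTop (nhds 0) := by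
    have h2 : Filter.Tendsto (fun n => b (n+1)) Filter.atTop (nhds (⨅ n, b n)) :=
      hbconv.comp (Filter.tendsto_add_atTop_nat 1)
    simpa using hbconv.sub h2
  have hnorm2 : Filter.Tendsto (fun n => ‖rnSeq P₀ n v‖^2) Filter.atTop (nhds 0) := by
    have : (fun n => ‖rnSeq P₀ n v‖^2) = fun n => b n - b (n+1) := by
      funext n; rw [hbdiff n]
    rw [this]; exact hdiff0
  have hnorm : Filter.Tendsto (fun n => ‖rnSeq P₀ n v‖) Filter.atTop (nhds 0) := by
    have heq : (fun n => ‖rnSeq P₀ n v‖) = fun n => Real.sqrt (‖rnSeq P₀ n v‖^2) := by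
      funext n; rw [Real.sqrt_sq (norm_nonneg _)]
    rw [heq]
    have := hnorm2.sqrt
    simpa using this
  -- key inequality for each n
  have hkey : ∀ n, -(‖rnSeq P₀ n v‖ * ‖Q v‖) ≤ ⟪v, (P₀ * Q) v⟫ := by
    intro n
    have hsum : ⟪v, (P₀ * Q) v⟫
        = (Finset.range n).sum (fun k => ⟪rnSeq P₀ k v, Q (rnSeq P₀ k v)⟫)
          + ⟪rnSeq P₀ n v, Q v⟫ := by
      have hPdecomp : P₀ * Q =
          (Finset.range n).sum (fun k => rnSeq P₀ k * Q * rnSeq P₀ k) + rnSeq P₀ n * Q := by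
        have ht := rnSeq_telescope P₀ n
        have : (Finset.range n).sum (fun k => rnSeq P₀ k * Q * rnSeq P₀ k)
            = (Finset.range n).sum (fun k => rnSeq P₀ k * rnSeq P₀ k) * Q := by
          rw [Finset.sum_mul]
          refine Finset.sum_congr rfl (fun k _ => ?_)
          have hcq : Commute (rnSeq P₀ k) Q := (props k).2.2
          calc rnSeq P₀ k * Q * rnSeq P₀ k = rnSeq P₀ k * (Q * rnSeq P₀ k) := by
                noncomm_ring
            _ = rnSeq P₀ k * (rnSeq P₀ k * Q) := by rw [hcq.eq]
            _ = rnSeq P₀ k * rnSeq P₀ k * Q := by noncomm_ring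
        rw [this, ht]; noncomm_ring
      rw [hPdecomp, ContinuousLinearMap.add_apply, inner_add_right,
        ContinuousLinearMap.sum_apply, inner_sum]
      congr 1
      · refine Finset.sum_congr rfl (fun k _ => ?_)
        exact inner_sq_eq (props k).1.1 Q v
      · show ⟪v, rnSeq P₀ n (Q v)⟫ = ⟪rnSeq P₀ n v, Q v⟫
        have hsym := (props n).1.1.isSymmetric v (Q v)
        simp only [ContinuousLinearMap.coe_coe] at hsym
        exact hsym.symm
    rw [hsum]
    have hsumnn : 0 ≤ (Finset.range n).sum (fun k => ⟪rnSeq P₀ k v, Q (rnSeq P₀ k v)⟫) :=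
      Finset.sum_nonneg (fun k _ => hQ.2 _)
    have hlast : -(‖rnSeq P₀ n v‖ * ‖Q v‖) ≤ ⟪rnSeq P₀ n v, Q v⟫ := by
      have := abs_real_inner_le_norm (rnSeq P₀ n v) (Q v)
      have h2 := neg_abs_le ⟪rnSeq P₀ n v, Q v⟫
      linarith
    linarith
  have hfinal : 0 ≤ ⟪v, (P₀ * Q) v⟫ := by
    have htends : Filter.Tendsto (fun n => -(‖rnSeq P₀ n v‖ * ‖Q v‖)) Filter.atTop (nhds 0) := by
      have := (hnorm.mul_const ‖Q v‖).neg
      simpa using this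
    exact le_of_tendsto' htends hkey
  have : ⟪v, (P * Q) v⟫ = ‖P‖ * ⟪v, (P₀ * Q) v⟫ := by
    rw [hP₀]
    have : ((‖P‖⁻¹ • P) * Q) v = ‖P‖⁻¹ • ((P * Q) v) := by
      simp [ContinuousLinearMap.smul_apply, ContinuousLinearMap.mul_apply]
    rw [this, real_inner_smul_right]
    field_simp
  rw [this]
  exact mul_nonneg hn.le hfinal

lemma Pos.mul {P Q : H →L[ℝ] H} (hP : Pos P) (hQ : Pos Q) (hc : Commute P Q) :
    Pos (P * Q) := by
  refine ⟨?_, pos_mul_of_commute hP hQ hc⟩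
  have h1 := hP.1
  have h2 := hQ.1
  simp only [IsSelfAdjoint, star_mul] at *
  rw [h1, h2, hc.eq]

lemma isUnit_of_bddBelow {S : H →L[ℝ] H} {c : ℝ} (hc : 0 < c)
    (h : ∀ v : H, c * ‖v‖^2 ≤ ⟪v, S v⟫) : IsUnit S := by
  refine ContinuousLinearMap.isUnit_of_forall_le_norm_inner_map S
    (c := ⟨c, hc.le⟩) (by exact_mod_cast hc) (fun v => ?_)
  have h1 := h v
  have h2 : ⟪S v, v⟫ = ⟪v, S v⟫ := real_inner_comm _ _
  rw [Real.norm_eq_abs, h2]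
  have h3 : c * ‖v‖^2 ≤ |⟪v, S v⟫| := h1.trans (le_abs_self _)
  calc ‖v‖^2 * (⟨c, hc.le⟩ : NNReal) = c * ‖v‖^2 := by
        simp [mul_comm]
    _ ≤ |⟪v, S v⟫| := h3

lemma key_gap (A : H →L[ℝ] H) (hA : IsSelfAdjoint A) {lam β : ℝ} (hlβ : lam < β)
    (hmin : ∀ t ∈ spectrum ℝ A, lam ≤ t)
    (hgap : spectrum ℝ A ∩ Set.Ioo lam β = ∅)
    {w : H} (hw : ∀ u : H, (A - lam • (1 : H →L[ℝ] H)) u = 0 → ⟪w, u⟫ = 0) :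
    β * ‖w‖^2 ≤ ⟪w, A w⟫ := by
  set T : H →L[ℝ] H := A - lam • (1 : H →L[ℝ] H) with hT
  set δ : ℝ := β - lam with hδ
  have hδpos : 0 < δ := by rw [hδ]; linarith
  have hTsa : IsSelfAdjoint T := by
    rw [hT]
    exact hA.sub (by simp only [IsSelfAdjoint, star_smul, star_one, star_trivial])
  have hsymT : ∀ a b : H, ⟪T a, b⟫ = ⟪a, T b⟫ := fun a b => by
    simpa using hTsa.isSymmetric a b
  -- units from spectrum complement
  have hnotspec : ∀ c : ℝ, c ∉ spectrum ℝ A → IsUnit (T - (c - lam) • (1 : H →L[ℝ] H)) := by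
    intro c hc
    rw [spectrum.notMem_iff] at hc
    have heq : T - (c - lam) • (1 : H →L[ℝ] H) = -((algebraMap ℝ (H →L[ℝ] H)) c - A) := by
      rw [Algebra.algebraMap_eq_smul_one, hT]
      ext v
      simp only [ContinuousLinearMap.sub_apply, ContinuousLinearMap.smul_apply,
        ContinuousLinearMap.one_apply, ContinuousLinearMap.neg_apply, sub_smul]
      abel
    rw [heq]
    exact hc.neg
  -- T is positive
  have hTpos : Pos T := by
    refine ⟨hTsa, pos_of_units hTsa (fun μ hμ => ?_)⟩
    have h1 : lam + μ ∉ spectrum ℝ A := fun hmem => by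
      have := hmin _ hmem; linarith
    have h2 := hnotspec _ h1
    simpa using h2
  -- the gap quadratic C = T² - δT is positive
  set C : H →L[ℝ] H := T * T - δ • T with hC
  have hCsa : IsSelfAdjoint C := by
    rw [hC]
    have h1 : IsSelfAdjoint (T * T) := by
      simp only [IsSelfAdjoint, star_mul] at *
      rw [hTsa]
    refine h1.sub ?_
    simp only [IsSelfAdjoint, star_smul, star_trivial]
    rw [hTsa]
  have hCpos : Pos C := by
    refine ⟨hCsa, pos_of_units hCsa (fun μ hμ => ?_)⟩
    set d : ℝ := δ^2 + 4*μ with hd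
    rcases lt_or_ge d 0 with hdneg | hdpos
    · -- no real roots: bounded below
      refine isUnit_of_bddBelow (c := -d/4) (by linarith) (fun v => ?_)
      have hexp : ⟪v, (C - μ • (1:H →L[ℝ] H)) v⟫
          = ‖T v‖^2 - δ * ⟪v, T v⟫ - μ * ‖v‖^2 := by
        simp only [hC, ContinuousLinearMap.sub_apply, ContinuousLinearMap.smul_apply,
          ContinuousLinearMap.one_apply, inner_sub_right, real_inner_smul_right,
          ContinuousLinearMap.mul_apply]
        have h1 : ⟪v, T (T v)⟫ = ‖T v‖^2 := by
          rw [← hsymT v (T v)]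
          · exact real_inner_self_eq_norm_sq _
        rw [h1, real_inner_self_eq_norm_sq]
      have hsq : 0 ≤ ‖T v - (δ/2) • v‖^2 := sq_nonneg _
      have hexp2 : ‖T v - (δ/2) • v‖^2
          = ‖T v‖^2 - δ * ⟪v, T v⟫ + (δ/2)^2 * ‖v‖^2 := by
        rw [norm_sub_sq_real]
        rw [real_inner_smul_right, norm_smul, Real.norm_eq_abs, abs_of_nonneg (by linarith : (0:ℝ) ≤ δ/2)]
        rw [real_inner_comm (T v) v]
        ring_nf
      rw [hexp]
      have hq4 : (δ/2)^2 = δ^2/4 := by ring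
      rw [hq4] at hexp2
      have key : 0 ≤ ‖T v‖^2 - δ * ⟪v, T v⟫ + δ^2/4 * ‖v‖^2 := by linarith [hsq, hexp2]
      rw [hd]
      linarith [key]
    · -- real roots in the gap
      have hsd : Real.sqrt d < δ := by
        rw [show δ = Real.sqrt (δ^2) by rw [Real.sqrt_sq hδpos.le]]
        exact Real.sqrt_lt_sqrt hdpos (by nlinarith)
      have hsdnn : 0 ≤ Real.sqrt d := Real.sqrt_nonneg d
      have hsq : Real.sqrt d ^ 2 = d := Real.sq_sqrt hdpos
      set rp : ℝ := (δ + Real.sqrt d)/2 with hrp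
      set rm : ℝ := (δ - Real.sqrt d)/2 with hrm
      have hrp1 : 0 < rp := by rw [hrp]; linarith
      have hrp2 : rp < δ := by rw [hrp]; linarith
      have hrm1 : 0 < rm := by rw [hrm]; linarith
      have hrm2 : rm < δ := by rw [hrm]; linarith
      have hnot : ∀ r : ℝ, 0 < r → r < δ → IsUnit (T - r • (1:H →L[ℝ] H)) := by
        intro r h1 h2
        have hmem : lam + r ∉ spectrum ℝ A := by
          intro hmem
          have : lam + r ∈ spectrum ℝ A ∩ Set.Ioo lam β := by
            refine ⟨hmem, by constructor <;> [linarith; (rw [hδ] at h2; linarith)]⟩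
          rw [hgap] at this
          exact this
        have := hnotspec _ hmem
        simpa using this
      have hup := hnot rp hrp1 hrp2
      have hum := hnot rm hrm1 hrm2
      have hfact : C - μ • (1:H →L[ℝ] H)
          = (T - rp • (1:H →L[ℝ] H)) * (T - rm • (1:H →L[ℝ] H)) := by
        have hsum : rp + rm = δ := by rw [hrp, hrm]; ring
        have hprod : rp * rm = -μ := by
          rw [hrp, hrm]
          have : (δ + Real.sqrt d)/2 * ((δ - Real.sqrt d)/2) = (δ^2 - Real.sqrt d^2)/4 := by ring
          rw [this, hsq, hd]; ring
        ext v
        simp only [hC, ContinuousLinearMap.sub_apply, ContinuousLinearMap.smul_apply,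
          ContinuousLinearMap.one_apply, ContinuousLinearMap.mul_apply, map_sub, map_smul]
        rw [smul_sub, smul_smul]
        have h2 : δ • T v = rp • T v + rm • T v := by rw [← add_smul, hsum]
        have h3 : μ • v = -((rm * rp) • v) := by
          rw [mul_comm rm rp, hprod, neg_smul, neg_neg]
        rw [h2, h3]
        abel
      rw [hfact]
      exact hup.mul hum
  -- resolvents
  have hunit : ∀ ε : ℝ, 0 < ε → IsUnit (T + ε • (1:H →L[ℝ] H)) := by
    intro ε hε
    refine isUnit_of_bddBelow hε (fun v => ?_)
    simp only [ContinuousLinearMap.add_apply, ContinuousLinearMap.smul_apply,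
      ContinuousLinearMap.one_apply, inner_add_right, real_inner_smul_right]
    have := hTpos.2 v
    rw [real_inner_self_eq_norm_sq]
    nlinarith
  -- the resolvent sequence at ε = 1/(n+1)
  set e : ℕ → ℝ := fun n => 1/(n+1) with he
  have hepos : ∀ n : ℕ, 0 < e n := fun n => by positivity
  have heanti : ∀ {n m : ℕ}, n ≤ m → e m ≤ e n := by
    intro n m hnm
    rw [he]
    have h1 : (n:ℝ) + 1 ≤ (m:ℝ) + 1 := by exact_mod_cast Nat.succ_le_succ hnm
    exact one_div_le_one_div_of_le (by positivity) h1
  have hetend : Filter.Tendsto e Filter.atTop (nhds 0) :=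
    tendsto_one_div_add_atTop_nhds_zero_nat
  have hch : ∀ n : ℕ, ∃ u : (H →L[ℝ] H)ˣ, (u : H →L[ℝ] H) = T + (e n) • 1 := by
    intro n
    obtain ⟨u, hu⟩ := hunit (e n) (hepos n)
    exact ⟨u, hu⟩
  choose U hU using hch
  set R : ℕ → (H →L[ℝ] H) := fun n => ((U n)⁻¹ : (H →L[ℝ] H)ˣ) with hRdef
  have hR1 : ∀ n, (T + (e n) • 1) * R n = 1 := fun n => by
    rw [hRdef, ← hU n]; exact (U n).mul_inv
  have hR2 : ∀ n, R n * (T + (e n) • 1) = 1 := fun n => by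
    rw [hRdef, ← hU n]; exact (U n).inv_mul
  have happly1 : ∀ n v, (T + (e n) • 1) (R n v) = v := by
    intro n v
    have := DFunLike.congr_fun (hR1 n) v
    simpa using this
  have happly2 : ∀ n v, R n ((T + (e n) • 1) v) = v := by
    intro n v
    have := DFunLike.congr_fun (hR2 n) v
    simpa using this
  have hTεsa : ∀ n, IsSelfAdjoint (T + (e n) • (1 : H →L[ℝ] H)) := by
    intro n
    refine hTsa.add ?_
    simp only [IsSelfAdjoint, star_smul, star_one, star_trivial]
  have hRsa : ∀ n, IsSelfAdjoint (R n) := by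
    intro n
    have h1 : (T + (e n) • 1) * star (R n) = 1 := by
      have := congrArg star (hR2 n)
      rw [star_mul, star_one, (hTεsa n)] at this
      exact this
    calc star (R n) = (R n * (T + (e n) • 1)) * star (R n) := by rw [hR2 n, one_mul]
      _ = R n * ((T + (e n) • 1) * star (R n)) := by rw [mul_assoc]
      _ = R n := by rw [h1, mul_one]
  have hRpos : ∀ n, Pos (R n) := by
    intro n
    refine ⟨hRsa n, fun v => ?_⟩
    have hz : v = (T + (e n) • 1) (R n v) := (happly1 n v).symm
    set z := R n v with hzdef
    calc (0:ℝ) ≤ ⟪z, T z⟫ + (e n) * ⟪z, z⟫ := by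
          have := hTpos.2 z
          have h2 : 0 ≤ ⟪z, z⟫ := real_inner_self_nonneg
          have := hepos n
          nlinarith
      _ = ⟪z, (T + (e n) • 1) z⟫ := by
          simp only [ContinuousLinearMap.add_apply, ContinuousLinearMap.smul_apply,
            ContinuousLinearMap.one_apply, inner_add_right, real_inner_smul_right]
      _ = ⟪(T + (e n) • 1) z, z⟫ := real_inner_comm _ _
      _ = ⟪v, R n v⟫ := by rw [← hz, real_inner_comm]
  have hRbound : ∀ n v, (e n) * ‖R n v‖ ≤ ‖v‖ := by
    intro n v
    set z := R n v with hzdef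
    have h1 : (e n) * ‖z‖^2 ≤ ⟪z, v⟫ := by
      have hv : v = (T + (e n) • 1) z := (happly1 n v).symm
      rw [hv]
      simp only [ContinuousLinearMap.add_apply, ContinuousLinearMap.smul_apply,
        ContinuousLinearMap.one_apply, inner_add_right, real_inner_smul_right]
      have := hTpos.2 z
      rw [real_inner_self_eq_norm_sq]
      nlinarith
    have h2 : ⟪z, v⟫ ≤ ‖z‖ * ‖v‖ := real_inner_le_norm _ _
    rcases eq_or_lt_of_le (norm_nonneg z) with h0 | h0
    · rw [← h0]; simp [norm_nonneg]
    · have := (hepos n)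
      nlinarith
  set Sf : ℕ → (H →L[ℝ] H) := fun n => (e n) • R n with hSf
  have hSpos : ∀ n, Pos (Sf n) := fun n => (hRpos n).smul (hepos n).le
  have hSnorm : ∀ n, ‖Sf n‖ ≤ 1 := by
    intro n
    refine ContinuousLinearMap.opNorm_le_bound _ zero_le_one (fun v => ?_)
    rw [hSf]
    simp only [ContinuousLinearMap.smul_apply, norm_smul, Real.norm_eq_abs,
      abs_of_pos (hepos n), one_mul]
    exact hRbound n v
  -- commutation facts
  have hcommT : ∀ n, Commute T (R n) := by
    intro n
    have h1 : Commute T ((U n : H →L[ℝ] H)) := by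
      rw [hU n]
      show T * (T + (e n) • 1) = (T + (e n) • 1) * T
      ext v
      simp only [ContinuousLinearMap.mul_apply, ContinuousLinearMap.add_apply,
        ContinuousLinearMap.smul_apply, ContinuousLinearMap.one_apply, map_add, map_smul]
    exact h1.units_inv_right
  have hcommC : Commute C T := by
    rw [hC]
    show (T * T - δ • T) * T = T * (T * T - δ • T)
    ext v
    simp only [ContinuousLinearMap.mul_apply, ContinuousLinearMap.sub_apply,
      ContinuousLinearMap.smul_apply, map_sub, map_smul]
  have hcommCR : ∀ n, Commute (C + (e n) • T) (R n) := by
    intro n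
    have h1 : Commute (C + (e n) • T) ((U n : H →L[ℝ] H)) := by
      rw [hU n]
      show (C + (e n) • T) * (T + (e n) • 1) = (T + (e n) • 1) * (C + (e n) • T)
      rw [hC]
      ext v
      simp only [ContinuousLinearMap.mul_apply, ContinuousLinearMap.add_apply,
        ContinuousLinearMap.sub_apply, ContinuousLinearMap.smul_apply,
        ContinuousLinearMap.one_apply, map_add, map_sub, map_smul, smul_add, smul_sub,
        smul_smul]
      module
    exact h1.units_inv_right
  -- key positivity inequality
  have hkey : ∀ n, 0 ≤ ⟪w, (T - δ • 1) w⟫ + δ * ⟪w, Sf n w⟫ := by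
    intro n
    have hCT : Pos (C + (e n) • T) := hCpos.add (hTpos.smul (hepos n).le)
    have hprod := pos_mul_of_commute hCT (hRpos n) (hcommCR n) w
    have hopid : (C + (e n) • T) * R n = T - δ • 1 + (δ * e n) • R n := by
      have hstep : (T - δ • 1 + (δ * e n) • R n) * (T + (e n) • 1) = C + (e n) • T := by
        rw [add_mul, smul_mul_assoc, hR2 n, hC]
        ext v
        simp only [ContinuousLinearMap.add_apply, ContinuousLinearMap.sub_apply,
          ContinuousLinearMap.mul_apply, ContinuousLinearMap.smul_apply,
          ContinuousLinearMap.one_apply, map_add, map_sub, map_smul, smul_add, smul_sub,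
          smul_smul]
        module
      calc (C + (e n) • T) * R n
          = ((T - δ • 1 + (δ * e n) • R n) * (T + (e n) • 1)) * R n := by rw [hstep]
        _ = (T - δ • 1 + (δ * e n) • R n) * ((T + (e n) • 1) * R n) := by rw [mul_assoc]
        _ = T - δ • 1 + (δ * e n) • R n := by rw [hR1 n, mul_one]
    rw [hopid] at hprod
    have hexpand : ⟪w, (T - δ • 1 + (δ * e n) • R n) w⟫
        = ⟪w, (T - δ • 1) w⟫ + δ * ⟪w, Sf n w⟫ := by
      simp only [ContinuousLinearMap.add_apply, ContinuousLinearMap.smul_apply,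
        inner_add_right, real_inner_smul_right, hSf]
      ring
    rw [hexpand] at hprod
    exact hprod
  -- pointwise bound for Sf
  have hSb : ∀ n v, ‖Sf n v‖ ≤ ‖v‖ := by
    intro n v
    show ‖(e n) • R n v‖ ≤ ‖v‖
    rw [norm_smul, Real.norm_eq_abs, abs_of_pos (hepos n)]
    exact hRbound n v
  -- commutation between resolvents
  have hcommRR : ∀ n m : ℕ, Commute (R n) (R m) := by
    intro n m
    have hbase : Commute ((U n : H →L[ℝ] H)) ((U m : H →L[ℝ] H)) := by
      rw [hU n, hU m]
      show (T + e n • 1) * (T + e m • 1) = (T + e m • 1) * (T + e n • 1)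
      ext v
      simp only [ContinuousLinearMap.mul_apply, ContinuousLinearMap.add_apply,
        ContinuousLinearMap.smul_apply, ContinuousLinearMap.one_apply, map_add, map_smul,
        smul_add, smul_smul]
      rw [mul_comm (e n) (e m)]
      abel
    exact (hbase.units_inv_left).units_inv_right
  -- resolvent identity and difference formula
  have hdiff : ∀ {n m : ℕ}, n ≤ m →
      Sf n - Sf m = (e n - e m) • (R n * (T * R m)) := by
    intro n m hnm
    have hres : R n - R m = (e m - e n) • (R n * R m) := by
      have hsub : (T + e m • (1:H →L[ℝ] H)) - (T + e n • 1) = (e m - e n) • 1 := by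
        ext v
        simp only [ContinuousLinearMap.sub_apply, ContinuousLinearMap.add_apply,
          ContinuousLinearMap.smul_apply, ContinuousLinearMap.one_apply, sub_smul]
        abel
      calc R n - R m
          = (R n * (T + e m • 1)) * R m - (R n * (T + e n • 1)) * R m := by
            rw [mul_assoc, hR1 m, mul_one, hR2 n, one_mul]
        _ = (R n * ((T + e m • 1) - (T + e n • 1))) * R m := by
            rw [mul_sub, sub_mul]
        _ = ((e m - e n) • (R n * 1)) * R m := by rw [hsub, mul_smul_comm]
        _ = (e m - e n) • (R n * R m) := by rw [mul_one, smul_mul_assoc]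
    have hTRm : T * R m = 1 - (e m) • R m := by
      have h1 := hR1 m
      rw [add_mul, smul_mul_assoc, one_mul] at h1
      rw [eq_sub_iff_add_eq]
      exact h1
    have hC2 : R n * (T * R m) = R n - (e m) • (R n * R m) := by
      rw [hTRm, mul_sub, mul_one, mul_smul_comm]
    have hresε : (e m) • R n - (e m) • R m = ((e m) * (e m - e n)) • (R n * R m) := by
      rw [← smul_sub, hres, smul_smul]
    show (e n) • R n - (e m) • R m = (e n - e m) • (R n * (T * R m))
    rw [hC2]
    calc (e n) • R n - (e m) • R m
        = (e n - e m) • R n + ((e m) • R n - (e m) • R m) := by module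
      _ = (e n - e m) • R n + ((e m) * (e m - e n)) • (R n * R m) := by rw [hresε]
      _ = (e n - e m) • (R n - (e m) • (R n * R m)) := by module
  -- positivity of differences
  have hmono : ∀ {n m : ℕ}, n ≤ m → Pos (Sf n - Sf m) := by
    intro n m hnm
    rw [hdiff hnm]
    have h1 : Pos (T * R m) := hTpos.mul (hRpos m) (hcommT m)
    have h2 : Commute (R n) (T * R m) := ((hcommT n).symm).mul_right (hcommRR n m)
    have h3 : Pos (R n * (T * R m)) := (hRpos n).mul h1 h2
    exact h3.smul (by linarith [heanti hnm] : (0:ℝ) ≤ e n - e m)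
  -- the scalar sequence
  set b : ℕ → ℝ := fun n => ⟪w, Sf n w⟫ with hb
  have hbnn : ∀ n, 0 ≤ b n := fun n => (hSpos n).2 w
  have hbanti : Antitone b := antitone_nat_of_succ_le (fun n => by
    have := (hmono (Nat.le_succ n)).2 w
    simp only [ContinuousLinearMap.sub_apply, inner_sub_right] at this
    rw [hb]
    linarith)
  have hbdd : BddBelow (Set.range b) := ⟨0, by rintro r ⟨k, rfl⟩; exact hbnn k⟩
  set L : ℝ := ⨅ k, b k with hL
  have hbtend : Filter.Tendsto b Filter.atTop (nhds L) := tendsto_atTop_ciInf hbanti hbdd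
  have hLle : ∀ k, L ≤ b k := fun k => ciInf_le hbdd k
  -- Cauchy estimate
  have hcauchy_est : ∀ {n m : ℕ}, n ≤ m → ‖Sf n w - Sf m w‖^2 ≤ 2 * (b n - b m) := by
    intro n m hnm
    have hD := hmono hnm
    have hgcs := pos_GCS hD w
    have hDn : ‖Sf n - Sf m‖ ≤ 2 := by
      calc ‖Sf n - Sf m‖ ≤ ‖Sf n‖ + ‖Sf m‖ := norm_sub_le _ _
        _ ≤ 1 + 1 := add_le_add (hSnorm n) (hSnorm m)
        _ = 2 := by norm_num
    have hDw : ⟪w, (Sf n - Sf m) w⟫ = b n - b m := by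
      simp only [ContinuousLinearMap.sub_apply, inner_sub_right, hb]
    have hDapply : (Sf n - Sf m) w = Sf n w - Sf m w := rfl
    rw [hDw] at hgcs
    rw [hDapply] at hgcs
    have hnn : 0 ≤ ⟪w, (Sf n - Sf m) w⟫ := hD.2 w
    rw [hDw] at hnn
    calc ‖Sf n w - Sf m w‖^2 ≤ ‖Sf n - Sf m‖ * (b n - b m) := hgcs
      _ ≤ 2 * (b n - b m) := mul_le_mul_of_nonneg_right hDn hnn
  -- the sequence Sf n w is Cauchy
  have hcs : CauchySeq (fun n => Sf n w) := by
    rw [Metric.cauchySeq_iff']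
    intro ε hε
    have h1 : ∀ᶠ n in Filter.atTop, b n < L + ε^2/2 :=
      hbtend.eventually_lt_const (by nlinarith)
    obtain ⟨N, hN⟩ := h1.exists_forall_of_atTop
    refine ⟨N, fun n hn => ?_⟩
    have h2 := hcauchy_est hn
    have h3 : b N - b n ≤ b N - L := by linarith [hLle n]
    have h4 : ‖Sf N w - Sf n w‖^2 < ε^2 := by
      calc ‖Sf N w - Sf n w‖^2 ≤ 2 * (b N - b n) := h2
        _ ≤ 2 * (b N - L) := by linarith
        _ < ε^2 := by have := hN N (le_refl N); linarith [hLle N]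
    have h6 : dist (Sf n w) (Sf N w) = ‖Sf N w - Sf n w‖ := by
      rw [dist_eq_norm, norm_sub_rev]
    rw [h6]
    nlinarith [norm_nonneg (Sf N w - Sf n w), hε]
  obtain ⟨u, htend⟩ := cauchySeq_tendsto_of_complete hcs
  -- T u = 0
  have hTSf : ∀ n, T (Sf n w) = (e n) • w - (e n) • (Sf n w) := by
    intro n
    show T ((e n) • R n w) = (e n) • w - (e n) • ((e n) • R n w)
    rw [map_smul]
    have h1 : (T + e n • (1:H →L[ℝ] H)) (R n w) = w := happly1 n w
    simp only [ContinuousLinearMap.add_apply, ContinuousLinearMap.smul_apply,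
      ContinuousLinearMap.one_apply] at h1
    have h2 : T (R n w) = w - e n • R n w := by
      rw [eq_sub_iff_add_eq]; exact h1
    rw [h2, smul_sub, smul_smul, ← smul_smul]
  have hTu : T u = 0 := by
    have hc1 : Filter.Tendsto (fun n => T (Sf n w)) Filter.atTop (nhds (T u)) :=
      (T.continuous.tendsto u).comp htend
    have hc2 : Filter.Tendsto (fun n => T (Sf n w)) Filter.atTop (nhds 0) := by
      rw [tendsto_zero_iff_norm_tendsto_zero]
      have hub : ∀ n, ‖T (Sf n w)‖ ≤ 2 * ‖w‖ * e n := by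
        intro n
        rw [hTSf n]
        calc ‖(e n) • w - (e n) • (Sf n w)‖ ≤ ‖(e n) • w‖ + ‖(e n) • Sf n w‖ := norm_sub_le _ _
          _ = (e n) * ‖w‖ + (e n) * ‖Sf n w‖ := by
              rw [norm_smul, norm_smul, Real.norm_eq_abs, abs_of_pos (hepos n)]
          _ ≤ (e n) * ‖w‖ + (e n) * ‖w‖ := by
              have := hSb n w
              have := (hepos n).le
              nlinarith
          _ = 2 * ‖w‖ * e n := by ring
      have hlim : Filter.Tendsto (fun n => 2 * ‖w‖ * e n) Filter.atTop (nhds 0) := by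
        have := hetend.const_mul (2 * ‖w‖)
        simpa [he, one_div] using this
      exact squeeze_zero (fun n => norm_nonneg _) hub hlim
    exact tendsto_nhds_unique hc1 hc2
  have hwu : ⟪w, u⟫ = 0 := hw u hTu
  -- b n → ⟪w, u⟫ = 0
  have hbtend2 : Filter.Tendsto b Filter.atTop (nhds 0) := by
    have h1 : Filter.Tendsto (fun n => ⟪w, Sf n w⟫) Filter.atTop (nhds ⟪w, u⟫) :=
      Filter.Tendsto.inner tendsto_const_nhds htend
    rw [hwu] at h1
    exact h1
  -- pass to the limit in hkey
  have hfinal : 0 ≤ ⟪w, (T - δ • 1) w⟫ := by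
    have hlim : Filter.Tendsto (fun n => ⟪w, (T - δ • 1) w⟫ + δ * b n) Filter.atTop
        (nhds (⟪w, (T - δ • 1) w⟫ + δ * 0)) :=
      Filter.Tendsto.add tendsto_const_nhds (hbtend2.const_mul δ)
    have h2 : (0:ℝ) ≤ ⟪w, (T - δ • 1) w⟫ + δ * 0 := ge_of_tendsto' hlim (fun n => hkey n)
    simpa using h2
  -- unfold
  have hexp : ⟪w, (T - δ • 1) w⟫ = ⟪w, A w⟫ - lam * ‖w‖^2 - δ * ‖w‖^2 := by
    rw [hT]
    simp only [ContinuousLinearMap.sub_apply, ContinuousLinearMap.smul_apply,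
      ContinuousLinearMap.one_apply, inner_sub_right, real_inner_smul_right]
    all_goals rw [real_inner_self_eq_norm_sq]
    all_goals ring
  rw [hexp, hδ] at hfinal
  linarith

end AuxSpectral

/-- Improved `tan θ` eigenvector bound: if `λ = λ_min(A)` is an isolated eigenvalue of `A`
with complete eigenspace `X`, `β > λ` is the next spectral point, `y ≠ 0` satisfies
`λ < ρ(y) < β`, `x = P_X y`, `S = span{x,y}`, and `θ = ∠{x,y} < π/2`, then
`tan θ ≤ (1/(β − ρ(y)))·‖P_S r(y)‖/‖y‖`. -/
theorem stmt_19 [CompleteSpace H] (A : H →L[ℝ] H) (hA : IsSelfAdjoint A)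
    (lam β : ℝ) (hlβ : lam < β)
    (hmin : ∀ t ∈ spectrum ℝ A, lam ≤ t)
    (hβspec : β ∈ spectrum ℝ A)
    (hgap : spectrum ℝ A ∩ Set.Ioo lam β = ∅)
    (X : Submodule ℝ H) [HasOrthogonalProjection X]
    (hX : X = LinearMap.ker ((A - lam • (1 : H →L[ℝ] H) : H →L[ℝ] H) : H →ₗ[ℝ] H))
    (hXne : X ≠ ⊥)
    (y : H) (hy : y ≠ 0) (hρ₁ : lam < rq A y) (hρ₂ : rq A y < β)
    (S : Submodule ℝ H) [FiniteDimensional ℝ S]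
    (hS : S = Submodule.span ℝ ({(orthogonalProjection X y : H), y} : Set H))
    (hθ : ang (orthogonalProjection X y : H) y < Real.pi / 2) :
    Real.tan (ang (orthogonalProjection X y : H) y)
      ≤ (1 / (β - rq A y))
          * (‖(orthogonalProjection S (res A y) : H)‖ / ‖y‖) := by
  have hAsym : ∀ a b : H, ⟪A a, b⟫ = ⟪a, A b⟫ := fun a b => by
    simpa using hA.isSymmetric a b
  set x : H := (orthogonalProjection X y : H) with hx
  set w : H := y - x with hwdef
  have hxX : x ∈ X := (orthogonalProjection X y).2
  have hwperp : w ∈ Xᗮ := sub_starProjection_mem_orthogonal (K := X) y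
  have hxw : ⟪x, w⟫ = 0 := hwperp x hxX
  have hy' : y = x + w := by rw [hwdef]; abel
  set ρ : ℝ := rq A y with hρ
  have hyne : (0:ℝ) < ‖y‖ := norm_pos_iff.mpr hy
  have hyy : ⟪y, y⟫ = ‖y‖^2 := real_inner_self_eq_norm_sq y
  have hρval : ⟪y, A y⟫ = ρ * ‖y‖^2 := by
    rw [hρ, rq, hyy]
    field_simp
  -- x ≠ 0
  have hxy_inner : ⟪x, y⟫ = ‖x‖^2 := by
    rw [hy', inner_add_right, hxw, real_inner_self_eq_norm_sq, add_zero]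
  have hxne : x ≠ 0 := by
    intro h0
    rw [ang] at hθ
    rw [h0] at hθ
    simp only [inner_zero_left, abs_zero, norm_zero, zero_mul, zero_div,
      Real.arccos_zero] at hθ
    exact lt_irrefl _ hθ
  have hxpos : (0:ℝ) < ‖x‖ := norm_pos_iff.mpr hxne
  -- A x = lam • x
  have hAx : A x = lam • x := by
    have h1 : x ∈ LinearMap.ker ((A - lam • (1 : H →L[ℝ] H) : H →L[ℝ] H) : H →ₗ[ℝ] H) := hX ▸ hxX
    have h2 : (A - lam • (1 : H →L[ℝ] H)) x = 0 := LinearMap.mem_ker.mp h1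
    simp only [ContinuousLinearMap.sub_apply, ContinuousLinearMap.smul_apply,
      ContinuousLinearMap.one_apply, sub_eq_zero] at h2
    exact h2
  -- w ≠ 0
  have hwne : w ≠ 0 := by
    intro h0
    have hyx : y = x := by rw [hy', h0, add_zero]
    have h1 : ⟪y, A y⟫ = lam * ‖y‖^2 := by
      rw [hyx, hAx, real_inner_smul_right, real_inner_self_eq_norm_sq]
    rw [hρval] at h1
    have h2 : (‖y‖^2 : ℝ) ≠ 0 := by positivity
    have h3 : ρ = lam := mul_right_cancel₀ h2 h1
    linarith [hρ₁, h3.symm.le]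
  have hwpos : (0:ℝ) < ‖w‖ := norm_pos_iff.mpr hwne
  -- Pythagoras
  have hnorm2 : ‖y‖^2 = ‖x‖^2 + ‖w‖^2 := by
    rw [hy', norm_add_sq_real, hxw]
    ring
  -- tan θ = ‖w‖/‖x‖
  have hcos : |⟪x, y⟫| / (‖x‖ * ‖y‖) = ‖x‖ / ‖y‖ := by
    rw [hxy_inner, abs_of_nonneg (by positivity : (0:ℝ) ≤ ‖x‖^2)]
    field_simp
  have htan : Real.tan (ang x y) = ‖w‖ / ‖x‖ := by
    rw [ang, hcos, Real.tan_arccos]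
    have h1 : 1 - (‖x‖/‖y‖)^2 = (‖w‖/‖y‖)^2 := by
      field_simp
      linarith [hnorm2]
    rw [h1, Real.sqrt_sq (by positivity)]
    field_simp
  -- residual inner products
  set r : H := res A y with hr
  have hxr : ⟪x, r⟫ = (lam - ρ) * ‖x‖^2 := by
    rw [hr, res, inner_sub_right, real_inner_smul_right, hxy_inner, ← hρ]
    have h1 : ⟪x, A y⟫ = lam * ‖x‖^2 := by
      rw [← hAsym, hAx, real_inner_smul_left, hxy_inner]
    rw [h1]
    ring
  have hwx' : ⟪w, x⟫ = 0 := by rw [real_inner_comm]; exact hxw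
  have hxAw : ⟪x, A w⟫ = 0 := by
    rw [← hAsym, hAx, real_inner_smul_left, hxw, mul_zero]
  have hwAx : ⟪w, A x⟫ = 0 := by
    rw [hAx, real_inner_smul_right, hwx', mul_zero]
  have hyAy : ⟪y, A y⟫ = lam * ‖x‖^2 + ⟪w, A w⟫ := by
    rw [hy']
    rw [map_add, inner_add_left, inner_add_right, inner_add_right]
    have h1 : ⟪x, A x⟫ = lam * ‖x‖^2 := by
      rw [hAx, real_inner_smul_right, real_inner_self_eq_norm_sq]
    rw [h1, hxAw, hwAx]
    ring
  have hwAw : ⟪w, A w⟫ = ρ * ‖y‖^2 - lam * ‖x‖^2 := by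
    rw [hρval] at hyAy
    linarith
  have hwy : ⟪w, y⟫ = ‖w‖^2 := by
    rw [hy', inner_add_right, hwx', real_inner_self_eq_norm_sq, zero_add]
  have hwr : ⟪w, r⟫ = (ρ - lam) * ‖x‖^2 := by
    rw [hr, res, inner_sub_right, real_inner_smul_right, hwy, ← hρ]
    have h1 : ⟪w, A y⟫ = ⟪w, A w⟫ := by
      rw [hy', map_add, inner_add_right, hwAx, zero_add]
    rw [h1, hwAw, hnorm2]
    ring
  -- spectral gap bound
  have hwXperp : ∀ u : H, (A - lam • (1 : H →L[ℝ] H)) u = 0 → ⟪w, u⟫ = 0 := by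
    intro u hu
    have huX : u ∈ X := by rw [hX]; exact LinearMap.mem_ker.mpr hu
    rw [real_inner_comm]
    exact hwperp u huX
  have hkeyg : β * ‖w‖^2 ≤ ⟪w, A w⟫ := key_gap A hA hlβ hmin hgap hwXperp
  have hmain : (β - ρ) * ‖w‖^2 ≤ (ρ - lam) * ‖x‖^2 := by
    have h5 : ρ * ‖y‖^2 = ρ * ‖x‖^2 + ρ * ‖w‖^2 := by rw [hnorm2]; ring
    rw [hwAw] at hkeyg
    linarith
  -- membership in S
  have hxS : x ∈ S := by
    rw [hS]
    exact subset_span (Set.mem_insert _ _)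
  have hyS : y ∈ S := by
    rw [hS]
    exact subset_span (Set.mem_insert_of_mem _ rfl)
  have hwS : w ∈ S := by
    rw [hwdef]
    exact S.sub_mem hyS hxS
  set g : H := (orthogonalProjection S r : H) with hg
  have hproj : ∀ s, s ∈ S → ⟪s, r⟫ = ⟪s, g⟫ := by
    intro s hs
    have hperp : r - g ∈ Sᗮ := sub_starProjection_mem_orthogonal (K := S) r
    have h1 := hperp s hs
    rw [inner_sub_right] at h1
    linarith
  have hxg : ⟪x, g⟫ = (lam - ρ) * ‖x‖^2 := by rw [← hproj x hxS]; exact hxr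
  have hwg : ⟪w, g⟫ = (ρ - lam) * ‖x‖^2 := by rw [← hproj w hwS]; exact hwr
  -- Bessel-type bound
  have hbessel : ⟪x,g⟫^2/‖x‖^2 + ⟪w,g⟫^2/‖w‖^2 ≤ ‖g‖^2 := by
    set p : H := (⟪x,g⟫/‖x‖^2) • x + (⟪w,g⟫/‖w‖^2) • w with hp
    have hpg : ⟪p, g⟫ = ⟪x,g⟫^2/‖x‖^2 + ⟪w,g⟫^2/‖w‖^2 := by
      rw [hp, inner_add_left, real_inner_smul_left, real_inner_smul_left]
      ring
    have hpp : ⟪p, p⟫ = ⟪x,g⟫^2/‖x‖^2 + ⟪w,g⟫^2/‖w‖^2 := by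
      rw [hp]
      rw [inner_add_left, inner_add_right, inner_add_right]
      rw [real_inner_smul_left, real_inner_smul_left, real_inner_smul_left,
        real_inner_smul_left, real_inner_smul_right, real_inner_smul_right,
        real_inner_smul_right, real_inner_smul_right]
      rw [hxw, hwx', real_inner_self_eq_norm_sq, real_inner_self_eq_norm_sq]
      have hx2 : ‖x‖^2 ≠ 0 := by positivity
      have hw2 : ‖w‖^2 ≠ 0 := by positivity
      field_simp
      ring
    have hkey2 : 0 ≤ ‖g - p‖^2 := sq_nonneg _
    have hexpand : ‖g - p‖^2 = ‖g‖^2 - 2*⟪p,g⟫ + ⟪p,p⟫ := by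
      rw [norm_sub_sq_real, real_inner_comm g p,
        show (‖p‖:ℝ)^2 = ⟪p,p⟫ from (real_inner_self_eq_norm_sq p).symm]
    rw [hexpand, hpg, hpp] at hkey2
    linarith
  -- lower bound for ‖g‖
  have hgsq : ((ρ-lam) * (‖x‖*‖y‖/‖w‖))^2 ≤ ‖g‖^2 := by
    have hx2 : ‖x‖ ≠ 0 := hxpos.ne'
    have hw2 : ‖w‖ ≠ 0 := hwpos.ne'
    have heq0 : ((ρ-lam) * (‖x‖*‖y‖/‖w‖))^2 = (ρ-lam)^2 * ‖x‖^2 * ‖y‖^2 / ‖w‖^2 := by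
      field_simp
    have heq : ((ρ-lam) * (‖x‖*‖y‖/‖w‖))^2 = ⟪x,g⟫^2/‖x‖^2 + ⟪w,g⟫^2/‖w‖^2 := by
      rw [heq0, hnorm2, hxg, hwg]
      field_simp
      ring
    rw [heq]
    exact hbessel
  have hgl : (ρ-lam) * (‖x‖*‖y‖/‖w‖) ≤ ‖g‖ := by
    have h1 : 0 ≤ (ρ-lam) * (‖x‖*‖y‖/‖w‖) := by
      have : (0:ℝ) < ρ - lam := by linarith [hρ₁]
      positivity
    nlinarith [hgsq, norm_nonneg g]
  -- final chain
  rw [htan]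
  have hβρ : (0:ℝ) < β - ρ := by linarith [hρ₂]
  have hρlam : (0:ℝ) < ρ - lam := by linarith [hρ₁]
  have step1 : ‖w‖/‖x‖ ≤ (ρ-lam)*‖x‖/((β-ρ)*‖w‖) := by
    rw [div_le_div_iff₀ hxpos (by positivity)]
    nlinarith [hmain]
  have step2 : (ρ-lam)*‖x‖/((β-ρ)*‖w‖) ≤ (1/(β-ρ)) * (‖g‖/‖y‖) := by
    have hrhs : (1/(β-ρ)) * (‖g‖/‖y‖) = ‖g‖/((β-ρ)*‖y‖) := by
      field_simp
    have hlhs : (ρ-lam)*‖x‖/((β-ρ)*‖w‖) = ((ρ-lam)*(‖x‖*‖y‖/‖w‖))/((β-ρ)*‖y‖) := by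
      field_simp
    rw [hrhs, hlhs]
    gcongr
  calc ‖w‖/‖x‖ ≤ (ρ-lam)*‖x‖/((β-ρ)*‖w‖) := step1
    _ ≤ (1/(β-ρ)) * (‖g‖/‖y‖) := step2
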